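/- Let I = (x^{A_1},...,x^{A_r}) be a monomial ideal in k[x_1,...,x_n], and let p(I) denote the numerator of the Hilbert series of k[x_1,...,x_n]/I over the common denominator (1−t)^n. Then p(I) = p((x^{A_1})) − Σ_{i=2}^{r} t^{|A_i|} p((x^{A_1},...,x^{A_{i−1}}) : x^{A_i}), where |A| is the total degree of x^A. -/

import Mathlib

open MvPolynomial

/-- The degree-`i` piece of `k[x]/I`. -/
noncomputable def gradedPieceDim (k : Type*) [Field k] {m : ℕ}
    (I : Ideal (MvPolynomial (Fin m) k)) (i : ℕ) : ℕ :=
  Module.finrank k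
    ((homogeneousSubmodule (Fin m) k i) ⧸
      (Submodule.comap (homogeneousSubmodule (Fin m) k i).subtype
        (Submodule.restrictScalars k I)))

/-- The Hilbert series of `k[x₁,…,x_n]/I` as a formal power series over `ℤ`. -/
noncomputable def hilbSeries (k : Type*) [Field k] {m : ℕ}
    (I : Ideal (MvPolynomial (Fin m) k)) : PowerSeries ℤ :=
  PowerSeries.mk fun i => (gradedPieceDim k I i : ℤ)

/-- The numerator `p(I)` of the Hilbert series of `k[x₁,…,x_n]/I` over the
common denominator `(1-t)^n`, i.e. `p(I) = (1-t)^n · HS(I)`. -/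
noncomputable def hilbNum (k : Type*) [Field k] {m : ℕ}
    (I : Ideal (MvPolynomial (Fin m) k)) : PowerSeries ℤ :=
  (1 - PowerSeries.X) ^ m * hilbSeries k I

namespace HilbAux

open scoped Classical

variable {k : Type*} [Field k] {n : ℕ}

abbrev mdeg (b : Fin n →₀ ℕ) : ℕ := b.sum fun _ e => e

lemma mdeg_eq_weight (b : Fin n →₀ ℕ) : mdeg b = Finsupp.weight 1 b := by
  simp [mdeg, Finsupp.weight_apply]

lemma mdeg_add (b c : Fin n →₀ ℕ) : mdeg (b + c) = mdeg b + mdeg c := by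
  simp [mdeg_eq_weight, map_add]

noncomputable def degSet (n d : ℕ) : Finset (Fin n →₀ ℕ) := Finset.univ.finsuppAntidiag d

lemma mem_degSet {d : ℕ} {b : Fin n →₀ ℕ} : b ∈ degSet n d ↔ mdeg b = d := by
  rw [degSet, Finset.mem_finsuppAntidiag]
  constructor
  · rintro ⟨h, -⟩
    rw [← h, mdeg, Finsupp.sum_fintype]
    intro; rfl
  · intro h
    refine ⟨?_, Finset.subset_univ _⟩
    rw [← h, mdeg, Finsupp.sum_fintype]
    intro; rfl

noncomputable def cnt (G : Set (Fin n →₀ ℕ)) (d : ℕ) : ℕ :=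
  ((degSet n d).filter (fun b => ¬ ∃ g ∈ G, g ≤ b)).card

lemma gradedPieceDim_eq (G : Set (Fin n →₀ ℕ)) (d : ℕ) :
    gradedPieceDim k (Ideal.span ((fun a => monomial a (1 : k)) '' G)) d = cnt G d := by
  classical
  set I : Ideal (MvPolynomial (Fin n) k) := Ideal.span ((fun a => monomial a (1 : k)) '' G) with hI
  set V := homogeneousSubmodule (Fin n) k d with hV
  set Tf : Finset (Fin n →₀ ℕ) := (degSet n d).filter (fun b => ¬ ∃ g ∈ G, g ≤ b) with hTf
  set T : Set (Fin n →₀ ℕ) := ↑Tf with hT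
  let φ : V →ₗ[k] (T →₀ k) :=
    ((Finsupp.lsubtypeDomain (M := k) (R := k) T).comp
      (AddMonoidAlgebra.coeffLinearEquiv k).toLinearMap).comp V.subtype
  have hφapp : ∀ (p : V) (b : T), φ p b = coeff (b : Fin n →₀ ℕ) (p : MvPolynomial (Fin n) k) := by
    intro p b; rfl
  have hker : LinearMap.ker φ = Submodule.comap V.subtype (Submodule.restrictScalars k I) := by
    ext p
    simp only [LinearMap.mem_ker, Submodule.mem_comap, Submodule.restrictScalars_mem,
      Submodule.coe_subtype]
    rw [hI, mem_ideal_span_monomial_image]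
    constructor
    · intro h0 xi hxi
      by_contra hg
      have hb : xi ∈ T := by
        rw [hT, Finset.mem_coe, hTf, Finset.mem_filter]
        refine ⟨mem_degSet.2 ?_, hg⟩
        have hp := (mem_homogeneousSubmodule d (p : MvPolynomial (Fin n) k)).1 p.2
        have := hp (MvPolynomial.mem_support_iff.1 hxi)
        rw [mdeg_eq_weight]
        exact this
      have := DFunLike.congr_fun h0 (⟨xi, hb⟩ : T)
      rw [hφapp] at this
      exact (MvPolynomial.mem_support_iff.1 hxi) this
    · intro h
      ext b
      rw [hφapp, Finsupp.coe_zero, Pi.zero_apply]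
      by_contra hc
      have hb : (b : Fin n →₀ ℕ) ∈ (p : MvPolynomial (Fin n) k).support :=
        MvPolynomial.mem_support_iff.2 hc
      have hb2 : (b : Fin n →₀ ℕ) ∈ (degSet n d).filter (fun b => ¬ ∃ g ∈ G, g ≤ b) := b.2
      exact (Finset.mem_filter.1 hb2).2 (h _ hb)
  have hsurj : Function.Surjective φ := by
    intro f
    let p : MvPolynomial (Fin n) k := f.sum fun b c => monomial (b : Fin n →₀ ℕ) c
    have hp : p ∈ V := by
      rw [hV]
      apply Submodule.sum_mem
      intro b _
      rw [mem_homogeneousSubmodule]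
      apply isHomogeneous_monomial
      have hb2 : (b : Fin n →₀ ℕ) ∈ (degSet n d).filter (fun b => ¬ ∃ g ∈ G, g ≤ b) := b.2
      have : mdeg (b : Fin n →₀ ℕ) = d := mem_degSet.1 (Finset.mem_filter.1 hb2).1
      exact this
    refine ⟨⟨p, hp⟩, ?_⟩
    ext b
    rw [hφapp]
    show coeff (b : Fin n →₀ ℕ) p = f b
    rw [show p = ∑ b' ∈ f.support, monomial (b' : Fin n →₀ ℕ) (f b') from rfl, coeff_sum]
    rw [Finset.sum_eq_single b]
    · simp [coeff_monomial]
    · intro b' _ hne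
      rw [coeff_monomial, if_neg]
      exact fun h => hne (Subtype.ext h)
    · intro hb
      rw [Finsupp.notMem_support_iff.1 hb, coeff_monomial]
      simp
  have : gradedPieceDim k I d = Module.finrank k (V ⧸ LinearMap.ker φ) := by
    rw [gradedPieceDim, hker]
  rw [this, LinearEquiv.finrank_eq (LinearMap.quotKerEquivOfSurjective φ hsurj),
    Module.finrank_finsupp_self, cnt]
  exact Fintype.card_coe Tf

end HilbAux

namespace Part2
variable {k : Type*} [Field k] {n : ℕ}

lemma support_mul_monomial (p : MvPolynomial (Fin n) k) (s m : Fin n →₀ ℕ) :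
    m ∈ (p * monomial s (1 : k)).support ↔ s ≤ m ∧ m - s ∈ p.support := by
  rw [MvPolynomial.mem_support_iff, coeff_mul_monomial']
  split_ifs with h
  · simp [h, MvPolynomial.mem_support_iff]
  · simp [h]

lemma colon_eq (A : ℕ → (Fin n →₀ ℕ)) (i : ℕ) :
    Submodule.colon (Ideal.span ((fun a => monomial a (1 : k)) '' (A '' Set.Iio i)))
        (Ideal.span {monomial (A i) (1 : k)}) =
      Ideal.span ((fun a => monomial a (1 : k)) '' ((fun j => A j - A i) '' Set.Iio i)) := by
  ext p
  rw [Ideal.mem_colon_span_singleton, mem_ideal_span_monomial_image, mem_ideal_span_monomial_image]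
  constructor
  · intro h b hb
    have hmem : (b + A i) ∈ (p * monomial (A i) (1 : k)).support := by
      rw [support_mul_monomial]
      exact ⟨le_add_self, by rwa [add_tsub_cancel_right]⟩
    obtain ⟨si, ⟨j, hj, rfl⟩, hle⟩ := h _ hmem
    exact ⟨A j - A i, ⟨j, hj, rfl⟩, tsub_le_iff_right.2 hle⟩
  · intro h m hm
    obtain ⟨hle, hsup⟩ := (support_mul_monomial p (A i) m).1 hm
    obtain ⟨si, ⟨j, hj, rfl⟩, hle2⟩ := h _ hsup
    refine ⟨A j, ⟨j, hj, rfl⟩, ?_⟩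
    have h3 : A j ≤ (m - A i) + A i := tsub_le_iff_right.1 hle2
    rwa [tsub_add_cancel_of_le hle] at h3

open HilbAux

lemma exists_image_iff (A : ℕ → (Fin n →₀ ℕ)) (i : ℕ) (b : Fin n →₀ ℕ) :
    (∃ g ∈ A '' Set.Iio i, g ≤ b) ↔ ∃ j < i, A j ≤ b := by
  constructor
  · rintro ⟨g, ⟨j, hj, rfl⟩, h⟩; exact ⟨j, hj, h⟩
  · rintro ⟨j, hj, h⟩; exact ⟨A j, ⟨j, hj, rfl⟩, h⟩

lemma exists_image_iff' (A : ℕ → (Fin n →₀ ℕ)) (i : ℕ) (b : Fin n →₀ ℕ) :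
    (∃ g ∈ (fun j => A j - A i) '' Set.Iio i, g ≤ b) ↔ ∃ j < i, A j - A i ≤ b := by
  constructor
  · rintro ⟨g, ⟨j, hj, rfl⟩, h⟩; exact ⟨j, hj, h⟩
  · rintro ⟨j, hj, h⟩; exact ⟨A j - A i, ⟨j, hj, rfl⟩, h⟩

lemma mdeg_mono {a b : Fin n →₀ ℕ} (h : a ≤ b) : mdeg (n := n) a ≤ mdeg b := by
  have : b = a + (b - a) := (add_tsub_cancel_of_le h).symm
  rw [this, mdeg_add]; omega

set_option maxHeartbeats 2000000 in
lemma cnt_step (A : ℕ → (Fin n →₀ ℕ)) (i d : ℕ) :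
    cnt (A '' Set.Iio i) d =
      cnt (A '' Set.Iio (i + 1)) d +
        (if mdeg (A i) ≤ d then
          cnt ((fun j => A j - A i) '' Set.Iio i) (d - mdeg (A i)) else 0) := by
  classical
  have e1 : cnt (A '' Set.Iio i) d
      = ((degSet n d).filter (fun b => ¬ ∃ j < i, A j ≤ b)).card := by
    unfold cnt; congr 1; apply Finset.filter_congr; intro b _; simp [exists_image_iff]
  have e2 : cnt (A '' Set.Iio (i + 1)) d
      = ((degSet n d).filter (fun b => (¬ ∃ j < i, A j ≤ b) ∧ ¬ A i ≤ b)).card := by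
    unfold cnt; congr 1; apply Finset.filter_congr; intro b _
    simp only [exists_image_iff, eq_iff_iff]
    constructor
    · intro h
      constructor
      · rintro ⟨j, hj, hle⟩; exact h ⟨j, hj.trans (Nat.lt_succ_self i), hle⟩
      · intro hle; exact h ⟨i, Nat.lt_succ_self i, hle⟩
    · rintro ⟨h1, h2⟩ ⟨j, hj, hle⟩
      rcases Nat.lt_succ_iff_lt_or_eq.1 hj with hj' | rfl
      · exact h1 ⟨j, hj', hle⟩
      · exact h2 hle
  have e3 : cnt ((fun j => A j - A i) '' Set.Iio i) (d - mdeg (A i))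
      = ((degSet n (d - mdeg (A i))).filter (fun c => ¬ ∃ j < i, A j ≤ c + A i)).card := by
    unfold cnt; congr 1; apply Finset.filter_congr; intro c _
    simp only [exists_image_iff', eq_iff_iff]
    constructor
    · intro h hx; obtain ⟨j, hj, hle⟩ := hx; exact h ⟨j, hj, tsub_le_iff_right.2 hle⟩
    · intro h hx; obtain ⟨j, hj, hle⟩ := hx; exact h ⟨j, hj, tsub_le_iff_right.1 hle⟩
  rw [e1, e2, e3]
  have hsum := Finset.card_filter_add_card_filter_not
    (s := (degSet n d).filter (fun b => ¬ ∃ j < i, A j ≤ b)) (p := fun b => A i ≤ b)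
  have hA : (((degSet n d).filter (fun b => ¬ ∃ j < i, A j ≤ b)).filter
        (fun b => ¬ A i ≤ b))
      = (degSet n d).filter (fun b => (¬ ∃ j < i, A j ≤ b) ∧ ¬ A i ≤ b) :=
    Finset.filter_filter _ _ _
  have hB : (((degSet n d).filter (fun b => ¬ ∃ j < i, A j ≤ b)).filter
        (fun b => A i ≤ b)).card
      = (if mdeg (A i) ≤ d then
          ((degSet n (d - mdeg (A i))).filter (fun c => ¬ ∃ j < i, A j ≤ c + A i)).card
        else 0) := by
    rw [Finset.filter_filter]
    by_cases hd : mdeg (A i) ≤ d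
    · rw [if_pos hd]
      apply Finset.card_bij' (i := fun b _ => b - A i) (j := fun c _ => c + A i)
      · intro b hb
        rw [Finset.mem_filter] at hb ⊢
        obtain ⟨hbd, hnb, hAb⟩ := hb
        refine ⟨mem_degSet.2 ?_, ?_⟩
        · have h2 : mdeg ((b - A i) + A i) = mdeg (b - A i) + mdeg (A i) := mdeg_add _ _
          rw [tsub_add_cancel_of_le hAb] at h2
          have hbd' : mdeg b = d := mem_degSet.1 hbd
          omega
        · intro hx
          obtain ⟨j, hj, hle⟩ := hx
          rw [tsub_add_cancel_of_le hAb] at hle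
          exact hnb ⟨j, hj, hle⟩
      · intro c hc
        rw [Finset.mem_filter] at hc ⊢
        obtain ⟨hcd, hnc⟩ := hc
        have hcd' : mdeg c = d - mdeg (A i) := mem_degSet.1 hcd
        refine ⟨mem_degSet.2 ?_, ?_, le_add_self⟩
        · rw [mdeg_add]; omega
        · intro hx
          obtain ⟨j, hj, hle⟩ := hx
          exact hnc ⟨j, hj, hle⟩
      · intro b hb
        exact tsub_add_cancel_of_le (Finset.mem_filter.1 hb).2.2
      · intro c _
        exact add_tsub_cancel_right _ _
    · rw [if_neg hd]
      rw [Finset.card_eq_zero, Finset.filter_eq_empty_iff]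
      intro b hb
      rintro ⟨-, hle⟩
      have hbd : mdeg b = d := mem_degSet.1 hb
      exact hd (hbd ▸ mdeg_mono hle)
  rw [hA] at hsum
  omega

end Part2

section Final
open HilbAux Part2
variable {k : Type*} [Field k] {n : ℕ}

lemma span_set_eq (A : ℕ → (Fin n →₀ ℕ)) (i : ℕ) :
    {q : MvPolynomial (Fin n) k | ∃ j < i, q = monomial (A j) (1 : k)} =
      (fun a => monomial a (1 : k)) '' (A '' Set.Iio i) := by
  ext q
  constructor
  · rintro ⟨j, hj, rfl⟩; exact ⟨A j, ⟨j, hj, rfl⟩, rfl⟩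
  · rintro ⟨a, ⟨j, hj, rfl⟩, rfl⟩; exact ⟨j, hj, rfl⟩

lemma hilbNum_step (A : ℕ → (Fin n →₀ ℕ)) (i : ℕ) :
    hilbNum k (Ideal.span {q : MvPolynomial (Fin n) k | ∃ j < i + 1, q = monomial (A j) (1 : k)}) =
      hilbNum k (Ideal.span {q : MvPolynomial (Fin n) k | ∃ j < i, q = monomial (A j) (1 : k)}) -
        (PowerSeries.X : PowerSeries ℤ) ^ ((A i).sum fun _ e => e) *
          hilbNum k (Submodule.colon
            (Ideal.span {q : MvPolynomial (Fin n) k | ∃ j < i, q = monomial (A j) (1 : k)})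
            (Ideal.span {monomial (A i) (1 : k)})) := by
  have hser : hilbSeries k
        (Ideal.span {q : MvPolynomial (Fin n) k | ∃ j < i + 1, q = monomial (A j) (1 : k)}) =
      hilbSeries k (Ideal.span {q : MvPolynomial (Fin n) k | ∃ j < i, q = monomial (A j) (1 : k)})
        - (PowerSeries.X : PowerSeries ℤ) ^ ((A i).sum fun _ e => e) *
          hilbSeries k (Submodule.colon
            (Ideal.span {q : MvPolynomial (Fin n) k | ∃ j < i, q = monomial (A j) (1 : k)})
            (Ideal.span {monomial (A i) (1 : k)})) := by
    ext d
    rw [map_sub, PowerSeries.coeff_X_pow_mul']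
    simp only [hilbSeries, PowerSeries.coeff_mk]
    have h1 : gradedPieceDim k
        (Ideal.span {q : MvPolynomial (Fin n) k | ∃ j < i + 1, q = monomial (A j) (1 : k)}) d
        = cnt (A '' Set.Iio (i + 1)) d := by
      rw [span_set_eq]; exact gradedPieceDim_eq _ _
    have h2 : gradedPieceDim k
        (Ideal.span {q : MvPolynomial (Fin n) k | ∃ j < i, q = monomial (A j) (1 : k)}) d
        = cnt (A '' Set.Iio i) d := by
      rw [span_set_eq]; exact gradedPieceDim_eq _ _
    have h3 : gradedPieceDim k (Submodule.colon
          (Ideal.span {q : MvPolynomial (Fin n) k | ∃ j < i, q = monomial (A j) (1 : k)})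
          (Ideal.span {monomial (A i) (1 : k)})) (d - ((A i).sum fun _ e => e))
        = cnt ((fun j => A j - A i) '' Set.Iio i) (d - ((A i).sum fun _ e => e)) := by
      rw [span_set_eq, colon_eq]; exact gradedPieceDim_eq _ _
    rw [h1, h2]
    have hkey : cnt (A '' Set.Iio i) d =
        cnt (A '' Set.Iio (i + 1)) d +
          (if ((A i).sum fun _ e => e) ≤ d then
            cnt ((fun j => A j - A i) '' Set.Iio i) (d - ((A i).sum fun _ e => e)) else 0) :=
      cnt_step A i d
    split_ifs with hd
    · rw [h3]
      rw [if_pos hd] at hkey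
      push_cast
      omega
    · rw [if_neg hd] at hkey
      push_cast
      omega
  rw [hilbNum, hilbNum, hilbNum, hser]
  ring

lemma hilbNum_telescope (A : ℕ → (Fin n →₀ ℕ)) (s : ℕ) :
    hilbNum k (Ideal.span
        {q : MvPolynomial (Fin n) k | ∃ j < s + 1, q = monomial (A j) (1 : k)}) =
      hilbNum k (Ideal.span {q : MvPolynomial (Fin n) k | ∃ j < 1, q = monomial (A j) (1 : k)}) -
        ∑ i ∈ Finset.Ico 1 (s + 1),
          (PowerSeries.X : PowerSeries ℤ) ^ ((A i).sum fun _ e => e) *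
            hilbNum k (Submodule.colon
              (Ideal.span {q : MvPolynomial (Fin n) k | ∃ j < i, q = monomial (A j) (1 : k)})
              (Ideal.span {monomial (A i) (1 : k)})) := by
  induction s with
  | zero => simp
  | succ s ih =>
      rw [Finset.sum_Ico_succ_top (by omega), hilbNum_step A (s + 1), ih]
      ring

end Final

/-- For a monomial ideal `I = (x^{A₀},…,x^{A_{r-1}})` one has
`p(I) = p((x^{A₀})) − Σ_{i=1}^{r-1} t^{|A_i|} p((x^{A₀},…,x^{A_{i-1}}) : x^{A_i})`. -/
theorem hilbNum_monomial_ideal_recursion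
    (k : Type*) [Field k] (n r : ℕ) (hr : 1 ≤ r)
    (A : ℕ → (Fin n →₀ ℕ)) :
    letI J : ℕ → Ideal (MvPolynomial (Fin n) k) := fun i =>
      Ideal.span {q | ∃ j < i, q = monomial (A j) (1 : k)}
    hilbNum k (J r) =
      hilbNum k (J 1) -
        ∑ i ∈ Finset.Ico 1 r,
          (PowerSeries.X : PowerSeries ℤ) ^ ((A i).sum fun _ e => e) *
            hilbNum k (Submodule.colon (J i) (Ideal.span {monomial (A i) (1 : k)})) := by
  obtain ⟨s, rfl⟩ : ∃ s, r = s + 1 := ⟨r - 1, by omega⟩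
  exact hilbNum_telescope A s
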